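/- There is a monoid isomorphism \hat B_n ≅ Q_n ⋊ B_n, where Q_n is the free commutative monoid on q_1,…,q_n and B_n acts on Q_n via the permutation action of the canonical projection B_n → S_n on the generators q_1,…,q_n. Consequently, every element of \hat B_n can be written uniquely in the form q_1^{a_1} ⋯ q_n^{a_n} X with X ∈ B_n and a_i ≥ 0. -/

import Mathlib

/-- Generators of the monoid `B̂_n` of braids with marked points: `s i` is `σ_{i+1}`,
`sInv i` is `σ_{i+1}⁻¹` (for `i : Fin (n-1)`, so these are `σ_1,…,σ_{n-1}` and their
inverses), and `q i` is the marked-point generator `q_{i+1}` (for `i : Fin n`). -/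
inductive MarkedBraidGen (n : ℕ) : Type
  | s : Fin (n - 1) → MarkedBraidGen n
  | sInv : Fin (n - 1) → MarkedBraidGen n
  | q : Fin n → MarkedBraidGen n

/-- The lower strand index `j` (as an element of `Fin n`) of the generator `σ` indexed by
`j : Fin (n-1)`. -/
def sLo {n : ℕ} (j : Fin (n - 1)) : Fin n := ⟨j.1, by have := j.2; omega⟩

/-- The upper strand index `j+1` of the generator `σ` indexed by `j : Fin (n-1)`. -/
def sHi {n : ℕ} (j : Fin (n - 1)) : Fin n := ⟨j.1 + 1, by have := j.2; omega⟩

/-- The transposition `T_j = (j, j+1)` on the `n` strands. -/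
def braidT {n : ℕ} (j : Fin (n - 1)) : Equiv.Perm (Fin n) := Equiv.swap (sLo j) (sHi j)

open MarkedBraidGen in
/-- The defining relations of `B̂_n`: `σ_j σ_j⁻¹ = σ_j⁻¹ σ_j = 1`, the braid relations
(adjacent and distant), `q_i q_j = q_j q_i`, and `q_i σ_j = σ_j q_{T_j(i)}`. -/
inductive MarkedBraidRel (n : ℕ) :
    FreeMonoid (MarkedBraidGen n) → FreeMonoid (MarkedBraidGen n) → Prop
  | mul_inv (i : Fin (n - 1)) :
      MarkedBraidRel n (FreeMonoid.of (s i) * FreeMonoid.of (sInv i)) 1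
  | inv_mul (i : Fin (n - 1)) :
      MarkedBraidRel n (FreeMonoid.of (sInv i) * FreeMonoid.of (s i)) 1
  | braid (i j : Fin (n - 1)) (h : (i : ℕ) + 1 = j) :
      MarkedBraidRel n
        (FreeMonoid.of (s i) * FreeMonoid.of (s j) * FreeMonoid.of (s i))
        (FreeMonoid.of (s j) * FreeMonoid.of (s i) * FreeMonoid.of (s j))
  | comm (i j : Fin (n - 1)) (h : (i : ℕ) + 2 ≤ j) :
      MarkedBraidRel n
        (FreeMonoid.of (s i) * FreeMonoid.of (s j))
        (FreeMonoid.of (s j) * FreeMonoid.of (s i))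
  | qq (i j : Fin n) :
      MarkedBraidRel n
        (FreeMonoid.of (q i) * FreeMonoid.of (q j))
        (FreeMonoid.of (q j) * FreeMonoid.of (q i))
  | qs (i : Fin n) (j : Fin (n - 1)) :
      MarkedBraidRel n
        (FreeMonoid.of (q i) * FreeMonoid.of (s j))
        (FreeMonoid.of (s j) * FreeMonoid.of (q (braidT j i)))

/-- The congruence generated by the defining relations of `B̂_n`. -/
def markedBraidCon (n : ℕ) : Con (FreeMonoid (MarkedBraidGen n)) :=
  conGen (MarkedBraidRel n)

/-- The monoid `B̂_n` of braids with marked points, given by the stated presentation. -/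
abbrev MarkedBraid (n : ℕ) := (markedBraidCon n).Quotient

/-- The Artin braid relations on `m` generators `σ_1,…,σ_m` (indexed by `Fin m`):
`σ_iσ_jσ_i(σ_jσ_iσ_j)⁻¹` for adjacent `i, j` and `σ_iσ_j(σ_jσ_i)⁻¹` for distant `i, j`. -/
def braidRels (m : ℕ) : Set (FreeGroup (Fin m)) :=
  {r | (∃ i j : Fin m, (i : ℕ) + 1 = j ∧
          r = FreeGroup.of i * FreeGroup.of j * FreeGroup.of i
                * (FreeGroup.of j * FreeGroup.of i * FreeGroup.of j)⁻¹)
     ∨ (∃ i j : Fin m, (i : ℕ) + 2 ≤ j ∧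
          r = FreeGroup.of i * FreeGroup.of j * (FreeGroup.of j * FreeGroup.of i)⁻¹)}

/-- The braid group `B_n` on `n` strands, presented with the `n-1` Artin generators. -/
abbrev BraidGroup (n : ℕ) := PresentedGroup (braidRels (n - 1))

/-- The element `q_1^{a_1} ⋯ q_n^{a_n}` of `B̂_n` attached to an exponent vector
`a : Fin n → ℕ` (an element of the free commutative monoid `Q_n`). -/
def qPow (n : ℕ) (a : Fin n → ℕ) : MarkedBraid n :=
  (List.ofFn fun i : Fin n =>
    ((markedBraidCon n).mk' (FreeMonoid.of (MarkedBraidGen.q i))) ^ (a i)).prod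

section Helpers

variable {M : Type*} [Monoid M]

/-- Product of pointwise products splits when cross terms commute. -/
lemma listProd_ofFn_mul {m : ℕ} (f g : Fin m → M)
    (hc : ∀ i j, Commute (g i) (f j)) :
    (List.ofFn fun i => f i * g i).prod = (List.ofFn f).prod * (List.ofFn g).prod := by
  induction m with
  | zero => simp
  | succ m ih =>
    rw [List.ofFn_succ, List.ofFn_succ, List.ofFn_succ, List.prod_cons, List.prod_cons,
      List.prod_cons, ih (fun i => f i.succ) (fun i => g i.succ) (fun i j => hc _ _)]
    have hcomm : Commute (g 0) ((List.ofFn fun i => f i.succ).prod) := by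
      apply Commute.list_prod_right
      intro x hx
      rw [List.mem_ofFn] at hx
      obtain ⟨i, rfl⟩ := hx
      exact hc 0 i.succ
    calc f 0 * g 0 * ((List.ofFn fun i => f i.succ).prod * (List.ofFn fun i => g i.succ).prod)
        = f 0 * (g 0 * (List.ofFn fun i => f i.succ).prod) * (List.ofFn fun i => g i.succ).prod := by
          simp [mul_assoc]
      _ = f 0 * ((List.ofFn fun i => f i.succ).prod * g 0) * (List.ofFn fun i => g i.succ).prod := by
          rw [hcomm.eq]
      _ = f 0 * (List.ofFn fun i => f i.succ).prod * (g 0 * (List.ofFn fun i => g i.succ).prod) := by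
          simp [mul_assoc]

/-- Pulling an element through a product of semiconjugated factors. -/
lemma mul_listProd_ofFn {m : ℕ} (x : M) (f g : Fin m → M)
    (h : ∀ i, x * f i = g i * x) :
    x * (List.ofFn f).prod = (List.ofFn g).prod * x := by
  induction m with
  | zero => simp
  | succ m ih =>
    rw [List.ofFn_succ, List.ofFn_succ, List.prod_cons, List.prod_cons, ← mul_assoc, h 0,
      mul_assoc, ih (fun i => f i.succ) (fun i => g i.succ) (fun i => h i.succ), ← mul_assoc]

lemma listProd_ofFn_single {m : ℕ} (f : Fin m → M) (i : Fin m)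
    (h : ∀ j, j ≠ i → f j = 1) :
    (List.ofFn f).prod = f i := by
  induction m with
  | zero => exact absurd i.2 (by omega)
  | succ m ih =>
    rw [List.ofFn_succ, List.prod_cons]
    rcases Fin.eq_zero_or_eq_succ i with rfl | ⟨k, rfl⟩
    · have : (List.ofFn fun j => f j.succ).prod = 1 := by
        apply List.prod_eq_one
        intro x hx
        rw [List.mem_ofFn] at hx
        obtain ⟨j, rfl⟩ := hx
        exact h j.succ (Fin.succ_ne_zero j)
      rw [this, mul_one]
    · rw [h 0 (Ne.symm (Fin.succ_ne_zero k)), one_mul,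
        ih (fun j => f j.succ) k (fun j hj => h j.succ (by simpa using hj))]

lemma listProd_ofFn_perm {m : ℕ} (f : Fin m → M) (σ : Equiv.Perm (Fin m))
    (hc : ∀ i j, Commute (f i) (f j)) :
    (List.ofFn fun i => f (σ i)).prod = (List.ofFn f).prod := by
  refine List.Perm.prod_eq' (Equiv.Perm.ofFn_comp_perm σ f) ?_
  rw [List.pairwise_ofFn]
  intro i j _
  exact hc _ _

end Helpers

namespace MarkedBraidAux

variable {n : ℕ}

/-- The generator `q_i` in `B̂_n`. -/
def mbQ (n : ℕ) (i : Fin n) : MarkedBraid n :=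
  (markedBraidCon n).mk' (FreeMonoid.of (MarkedBraidGen.q i))

/-- The generator `σ_j` in `B̂_n`. -/
def mbS (n : ℕ) (j : Fin (n - 1)) : MarkedBraid n :=
  (markedBraidCon n).mk' (FreeMonoid.of (MarkedBraidGen.s j))

/-- The generator `σ_j⁻¹` in `B̂_n`. -/
def mbSInv (n : ℕ) (j : Fin (n - 1)) : MarkedBraid n :=
  (markedBraidCon n).mk' (FreeMonoid.of (MarkedBraidGen.sInv j))

lemma mk_rel {x y : FreeMonoid (MarkedBraidGen n)} (h : MarkedBraidRel n x y) :
    (markedBraidCon n).mk' x = (markedBraidCon n).mk' y :=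
  (Con.eq _).2 (ConGen.Rel.of _ _ h)

lemma mbS_mul_mbSInv (j : Fin (n - 1)) : mbS n j * mbSInv n j = 1 := by
  have := mk_rel (MarkedBraidRel.mul_inv (n := n) j)
  simpa [mbS, mbSInv] using this

lemma mbSInv_mul_mbS (j : Fin (n - 1)) : mbSInv n j * mbS n j = 1 := by
  have := mk_rel (MarkedBraidRel.inv_mul (n := n) j)
  simpa [mbS, mbSInv] using this

lemma mbQ_comm (i k : Fin n) : mbQ n i * mbQ n k = mbQ n k * mbQ n i := by
  have := mk_rel (MarkedBraidRel.qq (n := n) i k)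
  simpa [mbQ] using this

lemma q_mul_s (i : Fin n) (j : Fin (n - 1)) :
    mbQ n i * mbS n j = mbS n j * mbQ n (braidT j i) := by
  have := mk_rel (MarkedBraidRel.qs (n := n) i j)
  simpa [mbQ, mbS] using this

lemma braidT_involutive (j : Fin (n - 1)) (i : Fin n) : braidT j (braidT j i) = i := by
  simp [braidT]

lemma s_mul_q (j : Fin (n - 1)) (i : Fin n) :
    mbS n j * mbQ n i = mbQ n (braidT j i) * mbS n j := by
  have h := q_mul_s (braidT j i) j
  rw [braidT_involutive] at h
  exact h.symm

lemma sInv_mul_q (j : Fin (n - 1)) (i : Fin n) :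
    mbSInv n j * mbQ n i = mbQ n (braidT j i) * mbSInv n j := by
  have h := q_mul_s i j
  calc mbSInv n j * mbQ n i
      = mbSInv n j * mbQ n i * (mbS n j * mbSInv n j) := by rw [mbS_mul_mbSInv, mul_one]
    _ = mbSInv n j * (mbQ n i * mbS n j) * mbSInv n j := by simp [mul_assoc]
    _ = mbSInv n j * (mbS n j * mbQ n (braidT j i)) * mbSInv n j := by rw [h]
    _ = (mbSInv n j * mbS n j) * (mbQ n (braidT j i) * mbSInv n j) := by simp [mul_assoc]
    _ = mbQ n (braidT j i) * mbSInv n j := by rw [mbSInv_mul_mbS, one_mul]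

lemma qPow_eq (a : Fin n → ℕ) : qPow n a = (List.ofFn fun i => mbQ n i ^ a i).prod := rfl

lemma mbQ_commute (i k : Fin n) : Commute (mbQ n i) (mbQ n k) := mbQ_comm i k

lemma qPow_add (a b : Fin n → ℕ) : qPow n (a + b) = qPow n a * qPow n b := by
  rw [qPow_eq, qPow_eq, qPow_eq,
    ← listProd_ofFn_mul (fun i => mbQ n i ^ a i) (fun i => mbQ n i ^ b i)
      (fun i j => (mbQ_commute i j).pow_pow _ _)]
  exact congrArg List.prod (congrArg List.ofFn (funext fun i => by rw [Pi.add_apply, pow_add]))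

lemma qPow_single (i : Fin n) :
    qPow n (fun k => if k = i then 1 else 0) = mbQ n i := by
  rw [qPow_eq]
  have := listProd_ofFn_single (fun k => mbQ n k ^ (if k = i then 1 else 0)) i
    (fun j hj => by simp [hj])
  simpa using this

lemma q_mul_qPow (i : Fin n) (a : Fin n → ℕ) :
    mbQ n i * qPow n a = qPow n ((fun k => if k = i then 1 else 0) + a) := by
  rw [qPow_add, qPow_single]

lemma s_mul_qPow (j : Fin (n - 1)) (a : Fin n → ℕ) :
    mbS n j * qPow n a = qPow n (fun k => a (braidT j k)) * mbS n j := by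
  rw [qPow_eq, qPow_eq]
  have h1 : mbS n j * (List.ofFn fun i => mbQ n i ^ a i).prod
      = (List.ofFn fun i => mbQ n (braidT j i) ^ a i).prod * mbS n j := by
    apply mul_listProd_ofFn
    intro i
    exact (SemiconjBy.pow_right (s_mul_q j i) (a i))
  rw [h1]
  congr 1
  have h2 : (List.ofFn fun i => mbQ n (braidT j i) ^ a i)
      = List.ofFn fun i => (fun k => mbQ n k ^ a (braidT j k)) (braidT j i) := by
    exact congrArg List.ofFn (funext fun i => by simp [braidT_involutive])
  rw [h2]
  exact listProd_ofFn_perm (fun k => mbQ n k ^ a (braidT j k)) (braidT j)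
    (fun i k => (mbQ_commute i k).pow_pow _ _)

lemma sInv_mul_qPow (j : Fin (n - 1)) (a : Fin n → ℕ) :
    mbSInv n j * qPow n a = qPow n (fun k => a (braidT j k)) * mbSInv n j := by
  rw [qPow_eq, qPow_eq]
  have h1 : mbSInv n j * (List.ofFn fun i => mbQ n i ^ a i).prod
      = (List.ofFn fun i => mbQ n (braidT j i) ^ a i).prod * mbSInv n j := by
    apply mul_listProd_ofFn
    intro i
    exact (SemiconjBy.pow_right (sInv_mul_q j i) (a i))
  rw [h1]
  congr 1
  have h2 : (List.ofFn fun i => mbQ n (braidT j i) ^ a i)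
      = List.ofFn fun i => (fun k => mbQ n k ^ a (braidT j k)) (braidT j i) := by
    exact congrArg List.ofFn (funext fun i => by simp [braidT_involutive])
  rw [h2]
  exact listProd_ofFn_perm (fun k => mbQ n k ^ a (braidT j k)) (braidT j)
    (fun i k => (mbQ_commute i k).pow_pow _ _)

end MarkedBraidAux

namespace MarkedBraidAux

variable {n : ℕ}

lemma braidGroup_rel_one {r : FreeGroup (Fin (n - 1))} (hr : r ∈ braidRels (n - 1)) :
    (QuotientGroup.mk r : BraidGroup n) = 1 :=
  (QuotientGroup.eq_one_iff r).2 (Subgroup.subset_normalClosure hr)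

lemma braid_rel₁ (i j : Fin (n - 1)) (h : (i : ℕ) + 1 = j) :
    (PresentedGroup.of i : BraidGroup n) * PresentedGroup.of j * PresentedGroup.of i
      = PresentedGroup.of j * PresentedGroup.of i * PresentedGroup.of j := by
  have h1 := braidGroup_rel_one (n := n)
    (Or.inl ⟨i, j, h, rfl⟩ :
      (FreeGroup.of i * FreeGroup.of j * FreeGroup.of i
        * (FreeGroup.of j * FreeGroup.of i * FreeGroup.of j)⁻¹) ∈ braidRels (n - 1))
  rw [QuotientGroup.mk_mul, QuotientGroup.mk_inv, QuotientGroup.mk_mul, QuotientGroup.mk_mul,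
    QuotientGroup.mk_mul, mul_inv_eq_one] at h1
  exact h1

lemma braid_rel₂ (i j : Fin (n - 1)) (h : (i : ℕ) + 2 ≤ j) :
    (PresentedGroup.of i : BraidGroup n) * PresentedGroup.of j
      = PresentedGroup.of j * PresentedGroup.of i := by
  have h1 := braidGroup_rel_one (n := n)
    (Or.inr ⟨i, j, h, rfl⟩ :
      (FreeGroup.of i * FreeGroup.of j * (FreeGroup.of j * FreeGroup.of i)⁻¹) ∈
        braidRels (n - 1))
  rw [QuotientGroup.mk_mul, QuotientGroup.mk_inv, QuotientGroup.mk_mul, QuotientGroup.mk_mul,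
    mul_inv_eq_one] at h1
  exact h1

/-- Underlying set of the semidirect product `Q_n ⋊ B_n` (tagged by the action `φ`). -/
@[ext]
structure MBP (n : ℕ) (φ : BraidGroup n →* Equiv.Perm (Fin n)) where
  a : Fin n → ℕ
  X : BraidGroup n

variable {φ : BraidGroup n →* Equiv.Perm (Fin n)}

instance : Mul (MBP n φ) :=
  ⟨fun z w => ⟨z.a + fun i => w.a ((φ z.X)⁻¹ i), z.X * w.X⟩⟩

instance : One (MBP n φ) := ⟨⟨0, 1⟩⟩

@[simp] lemma MBP.mul_a (z w : MBP n φ) :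
    (z * w).a = z.a + fun i => w.a ((φ z.X)⁻¹ i) := rfl
@[simp] lemma MBP.mul_X (z w : MBP n φ) : (z * w).X = z.X * w.X := rfl
@[simp] lemma MBP.one_a : (1 : MBP n φ).a = 0 := rfl
@[simp] lemma MBP.one_X : (1 : MBP n φ).X = 1 := rfl

instance : Monoid (MBP n φ) where
  mul_assoc x y z := by
    ext k
    · simp [add_assoc, mul_inv_rev]
    · simp [mul_assoc]
  one_mul x := by
    ext k
    · simp
    · simp
  mul_one x := by
    ext k
    · simp
    · simp

/-- Image of the generators under the projection to the semidirect product. -/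
def mbpGen (φ : BraidGroup n →* Equiv.Perm (Fin n)) : MarkedBraidGen n → MBP n φ
  | .s j => ⟨0, PresentedGroup.of j⟩
  | .sInv j => ⟨0, (PresentedGroup.of j)⁻¹⟩
  | .q i => ⟨fun k => if k = i then 1 else 0, 1⟩

/-- The projection `B̂_n →* Q_n ⋊ B_n`. -/
def mbF (φ : BraidGroup n →* Equiv.Perm (Fin n))
    (hφ : ∀ j : Fin (n - 1), φ (PresentedGroup.of j) = braidT j) :
    MarkedBraid n →* MBP n φ :=
  Con.lift _ (FreeMonoid.lift (mbpGen φ)) (by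
    rw [markedBraidCon, Con.conGen_le]
    intro x y h
    rw [Con.ker_rel]
    induction h with
    | mul_inv i =>
      ext k
      · simp [mbpGen]
      · simp [mbpGen]
    | inv_mul i =>
      ext k
      · simp [mbpGen]
      · simp [mbpGen]
    | braid i j h =>
      ext k
      · simp [mbpGen]
      · have h1 := braid_rel₁ i j h
        simp only [map_mul, FreeMonoid.lift_eval_of, mbpGen, MBP.mul_X]
        simp only [mul_assoc] at h1 ⊢
        exact h1
    | comm i j h =>
      ext k
      · simp [mbpGen]
      · have h1 := braid_rel₂ i j h
        simp only [map_mul, FreeMonoid.lift_eval_of, mbpGen, MBP.mul_X]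
        exact h1
    | qq i j =>
      ext k
      · simp [mbpGen]
        omega
      · simp [mbpGen]
    | qs i j =>
      ext k
      · simp only [map_mul, FreeMonoid.lift_eval_of, mbpGen, MBP.mul_a, hφ, Pi.add_apply]
        have hswap : (braidT j)⁻¹ = braidT j := by
          simp [braidT]
        rw [hswap]
        have : (braidT j k = braidT j i) = (k = i) := by
          simp [Equiv.apply_eq_iff_eq]
        simp [this, map_one]
      · simp [mbpGen])

lemma mbF_mk (hφ : ∀ j : Fin (n - 1), φ (PresentedGroup.of j) = braidT j)
    (g : MarkedBraidGen n) :
    mbF φ hφ ((markedBraidCon n).mk' (FreeMonoid.of g)) = mbpGen φ g := by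
  rw [mbF, Con.lift_mk', FreeMonoid.lift_eval_of]

end MarkedBraidAux

namespace MarkedBraidAux

variable {n : ℕ} {φ : BraidGroup n →* Equiv.Perm (Fin n)}

lemma mbpPow (b : Fin n → ℕ) (m : ℕ) :
    (⟨b, 1⟩ : MBP n φ) ^ m = ⟨m • b, 1⟩ := by
  induction m with
  | zero => ext k <;> simp
  | succ m ih =>
    rw [pow_succ, ih]
    ext k
    · simp [succ_nsmul, add_mul]
    · simp

lemma mbpProd {m : ℕ} (c : Fin m → (Fin n → ℕ)) :
    (List.ofFn fun i => (⟨c i, 1⟩ : MBP n φ)).prod = ⟨∑ i, c i, 1⟩ := by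
  induction m with
  | zero => ext k <;> simp
  | succ m ih =>
    rw [List.ofFn_succ, List.prod_cons, ih (fun i => c i.succ)]
    ext k
    · simp [Fin.sum_univ_succ]
    · simp

lemma qPow_zero : qPow n 0 = 1 := by
  rw [qPow_eq]
  apply List.prod_eq_one
  intro x hx
  rw [List.mem_ofFn] at hx
  obtain ⟨i, rfl⟩ := hx
  simp

lemma mbF_qPow (hφ : ∀ j : Fin (n - 1), φ (PresentedGroup.of j) = braidT j)
    (a : Fin n → ℕ) : mbF φ hφ (qPow n a) = ⟨a, 1⟩ := by
  rw [qPow_eq, map_list_prod, List.map_ofFn]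
  have h1 : ((mbF φ hφ) ∘ fun i => mbQ n i ^ a i)
      = fun i => (⟨a i • fun k => if k = i then 1 else 0, 1⟩ : MBP n φ) := by
    funext i
    simp only [Function.comp_apply, map_pow, mbQ, mbF_mk, mbpGen, mbpPow]
  rw [h1, mbpProd]
  ext k
  · simp only [Finset.sum_apply, Pi.smul_apply, smul_eq_mul, mul_ite, mul_one, mul_zero,
      Finset.sum_ite_eq, Finset.mem_univ, if_true]
  · rfl

/-- The canonical embedding of `B_n` into the semidirect product. -/
def mbpIncl (n : ℕ) (φ : BraidGroup n →* Equiv.Perm (Fin n)) :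
    BraidGroup n →* MBP n φ where
  toFun X := ⟨0, X⟩
  map_one' := rfl
  map_mul' X Y := by
    ext k
    · simp
    · simp

lemma mbF_iota (hφ : ∀ j : Fin (n - 1), φ (PresentedGroup.of j) = braidT j)
    (ι : BraidGroup n →* MarkedBraid n)
    (hι : ∀ j : Fin (n - 1),
      ι (PresentedGroup.of j) = (markedBraidCon n).mk' (FreeMonoid.of (MarkedBraidGen.s j)))
    (X : BraidGroup n) : mbF φ hφ (ι X) = ⟨0, X⟩ := by
  have key : ((mbF φ hφ).comp ι).toHomUnits = (mbpIncl n φ).toHomUnits := by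
    apply PresentedGroup.ext
    intro x
    apply Units.ext
    rw [MonoidHom.coe_toHomUnits, MonoidHom.coe_toHomUnits, MonoidHom.comp_apply, hι]
    have := mbF_mk (φ := φ) hφ (MarkedBraidGen.s x)
    rw [this]
    rfl
  have h2 : ((mbF φ hφ).comp ι) X = (mbpIncl n φ) X := by
    rw [← MonoidHom.coe_toHomUnits ((mbF φ hφ).comp ι) X, key, MonoidHom.coe_toHomUnits]
  simpa [mbpIncl] using h2

lemma iota_inv (ι : BraidGroup n →* MarkedBraid n)
    (hι : ∀ j : Fin (n - 1),
      ι (PresentedGroup.of j) = (markedBraidCon n).mk' (FreeMonoid.of (MarkedBraidGen.s j)))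
    (j : Fin (n - 1)) : ι ((PresentedGroup.of j)⁻¹) = mbSInv n j := by
  have h1 : ι (PresentedGroup.of j) * ι ((PresentedGroup.of j)⁻¹) = 1 := by
    rw [← map_mul, mul_inv_cancel, map_one]
  rw [hι] at h1
  exact (left_inv_eq_right_inv (mbSInv_mul_mbS j) h1).symm

lemma decomposition (hφ : ∀ j : Fin (n - 1), φ (PresentedGroup.of j) = braidT j)
    (ι : BraidGroup n →* MarkedBraid n)
    (hι : ∀ j : Fin (n - 1),
      ι (PresentedGroup.of j) = (markedBraidCon n).mk' (FreeMonoid.of (MarkedBraidGen.s j)))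
    (z : MarkedBraid n) :
    z = qPow n (mbF φ hφ z).a * ι (mbF φ hφ z).X := by
  induction z using Con.induction_on with
  | H w =>
  induction w using FreeMonoid.inductionOn' with
  | one =>
    have h1 : mbF φ hφ ((1 : FreeMonoid (MarkedBraidGen n)) : MarkedBraid n) = 1 := by
      rw [Con.coe_one, map_one]
    rw [h1, MBP.one_a, MBP.one_X, qPow_zero, map_one, mul_one, Con.coe_one]
  | of_mul b w ih =>
    have hsplit : ((FreeMonoid.of b * w : FreeMonoid (MarkedBraidGen n)) : MarkedBraid n)
        = ((FreeMonoid.of b : FreeMonoid (MarkedBraidGen n)) : MarkedBraid n) * (w : MarkedBraid n) := by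
      rw [Con.coe_mul]
    have hF : mbF φ hφ ((FreeMonoid.of b * w : FreeMonoid (MarkedBraidGen n)) : MarkedBraid n)
        = mbpGen φ b * mbF φ hφ (w : MarkedBraid n) := by
      rw [hsplit, map_mul]
      congr 1
    set a := (mbF φ hφ (w : MarkedBraid n)).a with ha
    set X := (mbF φ hφ (w : MarkedBraid n)).X with hX
    rw [hF, hsplit]
    cases b with
    | q i =>
      have hgen : ((FreeMonoid.of (MarkedBraidGen.q i) : FreeMonoid (MarkedBraidGen n)) : MarkedBraid n) = mbQ n i := rfl
      have hcomp : (mbpGen φ (MarkedBraidGen.q i) * mbF φ hφ (w : MarkedBraid n))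
          = ⟨(fun k => if k = i then 1 else 0) + a, X⟩ := by
        ext k
        · simp [mbpGen, ← ha]
        · simp [mbpGen, ← hX]
      rw [hgen, hcomp, ih, ← mul_assoc, q_mul_qPow]
    | s j =>
      have hgen : ((FreeMonoid.of (MarkedBraidGen.s j) : FreeMonoid (MarkedBraidGen n)) : MarkedBraid n) = mbS n j := rfl
      have hcomp : (mbpGen φ (MarkedBraidGen.s j) * mbF φ hφ (w : MarkedBraid n))
          = ⟨fun k => a (braidT j k), PresentedGroup.of j * X⟩ := by
        ext k
        · have hswap : (braidT j)⁻¹ = braidT j := by simp [braidT]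
          simp [mbpGen, ← ha, hφ, hswap]
        · simp [mbpGen, ← hX]
      rw [hgen, hcomp, ih, ← mul_assoc, s_mul_qPow, map_mul, hι, mul_assoc]
      rfl
    | sInv j =>
      have hgen : ((FreeMonoid.of (MarkedBraidGen.sInv j) : FreeMonoid (MarkedBraidGen n)) : MarkedBraid n) = mbSInv n j := rfl
      have hcomp : (mbpGen φ (MarkedBraidGen.sInv j) * mbF φ hφ (w : MarkedBraid n))
          = ⟨fun k => a (braidT j k), (PresentedGroup.of j)⁻¹ * X⟩ := by
        ext k
        · simp [mbpGen, ← ha, hφ]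
        · simp [mbpGen, ← hX]
      rw [hgen, hcomp, ih, ← mul_assoc, sInv_mul_qPow, map_mul, iota_inv ι hι, mul_assoc]

end MarkedBraidAux

/-- `B̂_n ≅ Q_n ⋊ B_n`. Here `Q_n` is the free commutative monoid on
`q_1,…,q_n` (identified with exponent vectors `Fin n → ℕ`), `φ : B_n → S_n` is the canonical
projection (`σ_j ↦ (j, j+1)`), and `ι : B_n → B̂_n` is the canonical map (`σ_j ↦ σ_j`).
There is a bijection `e` from `B̂_n` to the underlying set `Q_n × B_n` of the semidirect
product which is multiplicative for the semidirect multiplication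
`(a, X)(b, Y) = (a · X(b), XY)` (where `X` acts on exponent vectors via `φ`), and under
which every element of `B̂_n` is written — uniquely, since `e` is a bijection — in the form
`q_1^{a_1} ⋯ q_n^{a_n} X` with `a_i ≥ 0` and `X ∈ B_n`. -/
theorem markedBraid_semidirect (n : ℕ)
    (φ : BraidGroup n →* Equiv.Perm (Fin n))
    (hφ : ∀ j : Fin (n - 1), φ (PresentedGroup.of j) = braidT j)
    (ι : BraidGroup n →* MarkedBraid n)
    (hι : ∀ j : Fin (n - 1),
      ι (PresentedGroup.of j) = (markedBraidCon n).mk' (FreeMonoid.of (MarkedBraidGen.s j))) :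
    ∃ e : MarkedBraid n ≃ (Fin n → ℕ) × BraidGroup n,
      (∀ z : MarkedBraid n, z = qPow n (e z).1 * ι (e z).2)
      ∧ ∀ z w : MarkedBraid n,
          e (z * w) = ((e z).1 + fun i => (e w).1 ((φ (e z).2)⁻¹ i), (e z).2 * (e w).2) := by
  classical
  open MarkedBraidAux in
  refine ⟨{ toFun := fun z => ((mbF φ hφ z).a, (mbF φ hφ z).X)
            invFun := fun p => qPow n p.1 * ι p.2
            left_inv := fun z => (decomposition hφ ι hι z).symm
            right_inv := fun p => by
              show ((mbF φ hφ (qPow n p.1 * ι p.2)).a,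
                (mbF φ hφ (qPow n p.1 * ι p.2)).X) = p
              rw [map_mul, mbF_qPow hφ, mbF_iota hφ ι hι]
              have h1 : ((⟨p.1, 1⟩ : MBP n φ) * ⟨0, p.2⟩) = ⟨p.1, p.2⟩ := by
                ext k
                · simp
                · simp
              rw [h1] }, ?_, ?_⟩
  · intro z
    exact decomposition hφ ι hι z
  · intro z w
    show ((mbF φ hφ (z * w)).a, (mbF φ hφ (z * w)).X) = _
    rw [map_mul]
    rfl
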